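/- (Grid lower bound from a heavy vertex) In the d-dimensional torus grid (d a constant), if some vertex u receives at least log n / log log n balls as birthplaces and the maximum load is β, then β·(2β+1)^d ≥ log n / log log n; hence β = Ω((log n / log log n)^{1/(d+1)}). -/
import Mathlib

open Finset
open scoped Classical

def cdist {m : ℕ} (a b : Fin m) : ℕ :=
  min ((a.1 + m - b.1) % m) ((b.1 + m - a.1) % m)

def tdist {d m : ℕ} (u v : Fin d → Fin m) : ℕ :=
  ∑ i, cdist (u i) (v i)

lemma mod_inj1 (m : ℕ) (a : ℕ) (ha : a ≤ m) (x y : Fin m)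
    (h : (x.1 + m - a) % m = (y.1 + m - a) % m) : x = y := by
  have h2 : x.1 + m - a ≡ y.1 + m - a [MOD m] := h
  have h3 := h2.add_right a
  have ex : x.1 + m - a + a = x.1 + m := by omega
  have ey : y.1 + m - a + a = y.1 + m := by omega
  rw [ex, ey] at h3
  have h4 : x.1 ≡ y.1 [MOD m] := Nat.ModEq.add_right_cancel' m h3
  exact Fin.ext (by rw [← Nat.mod_eq_of_lt x.2, ← Nat.mod_eq_of_lt y.2]; exact h4)

lemma mod_inj2 (m : ℕ) (a : ℕ) (ha : a ≥ m) (x y : Fin m)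
    (h : (a - x.1) % m = (a - y.1) % m) : x = y := by
  have h2 : a - x.1 ≡ a - y.1 [MOD m] := h
  have h3 := h2.add_right (x.1 + y.1)
  have ex : a - x.1 + (x.1 + y.1) = a + y.1 := by omega
  have ey : a - y.1 + (x.1 + y.1) = a + x.1 := by omega
  rw [ex, ey] at h3
  have h4 : y.1 ≡ x.1 [MOD m] := Nat.ModEq.add_left_cancel' a h3
  exact Fin.ext (by rw [← Nat.mod_eq_of_lt x.2, ← Nat.mod_eq_of_lt y.2]; exact h4.symm)

lemma cball_card (m β : ℕ) (a : Fin m) :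
    (univ.filter (fun b : Fin m => cdist a b ≤ β)).card ≤ 2 * β + 1 := by
  classical
  rcases Nat.eq_zero_or_pos m with hm | hm
  · subst hm; simp
  have ham : a.1 < m := a.2
  -- sum of the two residues is 0 mod m
  have hsum : ∀ b : Fin m, ((a.1 + m - b.1) % m + (b.1 + m - a.1) % m) % m = 0 := by
    intro b
    have hb : b.1 < m := b.2
    have : (a.1 + m - b.1) + (b.1 + m - a.1) = 2 * m := by omega
    calc ((a.1 + m - b.1) % m + (b.1 + m - a.1) % m) % m
        = ((a.1 + m - b.1) + (b.1 + m - a.1)) % m := (Nat.add_mod _ _ _).symm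
      _ = (2 * m) % m := by rw [this]
      _ = 0 := Nat.mul_mod_left 2 m
  set f : Fin m → ℕ := fun b =>
    if (b.1 + m - a.1) % m ≤ β then (b.1 + m - a.1) % m
    else β + (a.1 + m - b.1) % m with hf
  have key : ∀ b ∈ univ.filter (fun b : Fin m => cdist a b ≤ β),
      f b ∈ Finset.range (2 * β + 1) := by
    intro b hb
    simp only [mem_filter, mem_univ, true_and, cdist, min_le_iff] at hb
    simp only [hf]
    split_ifs with h
    · exact Finset.mem_range.2 (by omega)
    · have hs : (a.1 + m - b.1) % m ≤ β := by omega
      exact Finset.mem_range.2 (by omega)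
  have := Finset.card_le_card_of_injOn f key ?_
  · simpa using this
  intro b hb c hc hbc
  simp only [mem_coe, mem_filter, mem_univ, true_and, cdist, min_le_iff] at hb hc
  have hb1 : b.1 < m := b.2
  have hc1 : c.1 < m := c.2
  -- positivity of s in else branch
  have spos : ∀ x : Fin m, ¬ (x.1 + m - a.1) % m ≤ β → 0 < (a.1 + m - x.1) % m := by
    intro x hx
    by_contra h0
    have h0' : (a.1 + m - x.1) % m = 0 := by omega
    have hx2 := hsum x
    rw [h0', Nat.zero_add, Nat.mod_eq_of_lt (Nat.mod_lt _ hm)] at hx2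
    omega
  simp only [hf] at hbc
  split_ifs at hbc with h1 h2 h2
  · exact mod_inj1 m a.1 (le_of_lt ham) b c hbc
  · have := spos c h2; omega
  · have := spos b h1; omega
  · have hbc' : (a.1 + m - b.1) % m = (a.1 + m - c.1) % m := by omega
    have eb : a.1 + m - b.1 = (a.1 + m) - b.1 := rfl
    exact mod_inj2 m (a.1 + m) (by omega) b c hbc'

lemma ball_card (d m β : ℕ) (u : Fin d → Fin m) :
    (univ.filter (fun v : Fin d → Fin m => tdist u v ≤ β)).card ≤ (2 * β + 1) ^ d := by
  classical
  have hsub : univ.filter (fun v : Fin d → Fin m => tdist u v ≤ β) ⊆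
      Fintype.piFinset (fun i => univ.filter (fun b : Fin m => cdist (u i) b ≤ β)) := by
    intro v hv
    simp only [mem_filter, mem_univ, true_and] at hv
    rw [Fintype.mem_piFinset]
    intro i
    simp only [mem_filter, mem_univ, true_and]
    calc cdist (u i) (v i) ≤ ∑ j, cdist (u j) (v j) :=
          Finset.single_le_sum (f := fun j => cdist (u j) (v j))
            (fun j _ => Nat.zero_le _) (mem_univ i)
      _ ≤ β := hv
  calc (univ.filter (fun v : Fin d → Fin m => tdist u v ≤ β)).card
      ≤ (Fintype.piFinset (fun i => univ.filter (fun b : Fin m => cdist (u i) b ≤ β))).card :=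
        Finset.card_le_card hsub
    _ = ∏ i, (univ.filter (fun b : Fin m => cdist (u i) b ≤ β)).card :=
        Fintype.card_piFinset _
    _ ≤ ∏ _i : Fin d, (2 * β + 1) :=
        Finset.prod_le_prod (fun _ _ => Nat.zero_le _) (fun i _ => cball_card m β (u i))
    _ = (2 * β + 1) ^ d := by simp

theorem torus_lower_bound_heavy_vertex (d m : ℕ) (n : ℕ) (hn : n = m ^ d)
    (N : ℕ) (birth place : Fin N → (Fin d → Fin m)) (β : ℕ)
    (hdist : ∀ i, tdist (birth i) (place i) ≤ β)
    (hload : ∀ v, (univ.filter (fun i => place i = v)).card ≤ β)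
    (u : Fin d → Fin m)
    (hheavy : Real.log n / Real.log (Real.log n) ≤
      ((univ.filter (fun i => birth i = u)).card : ℝ)) :
    Real.log n / Real.log (Real.log n) ≤ (β : ℝ) * (2 * β + 1) ^ d := by
  classical
  set B := univ.filter (fun v : Fin d → Fin m => tdist u v ≤ β) with hB
  have hsub : univ.filter (fun i => birth i = u) ⊆
      B.biUnion (fun v => univ.filter (fun i => place i = v)) := by
    intro i hi
    simp only [mem_filter, mem_univ, true_and] at hi
    rw [Finset.mem_biUnion]
    refine ⟨place i, ?_, by simp⟩
    simp only [hB, mem_filter, mem_univ, true_and]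
    rw [← hi]; exact hdist i
  have hcard : (univ.filter (fun i => birth i = u)).card ≤ β * (2 * β + 1) ^ d := by
    calc (univ.filter (fun i => birth i = u)).card
        ≤ (B.biUnion (fun v => univ.filter (fun i => place i = v))).card :=
          Finset.card_le_card hsub
      _ ≤ ∑ v ∈ B, (univ.filter (fun i => place i = v)).card :=
          Finset.card_biUnion_le
      _ ≤ ∑ _v ∈ B, β := Finset.sum_le_sum (fun v _ => hload v)
      _ = B.card * β := by rw [Finset.sum_const, smul_eq_mul]
      _ ≤ (2 * β + 1) ^ d * β := Nat.mul_le_mul_right _ (ball_card d m β u)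
      _ = β * (2 * β + 1) ^ d := Nat.mul_comm _ _
  refine hheavy.trans ?_
  have := Nat.cast_le (α := ℝ) |>.2 hcard
  push_cast at this ⊢
  linarith
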